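/- For a central extension 1 → N → G → H → 1 there is an exact sequence 1 → Aut^{N,H}(G) → Aut_N(G) →^τ Aut(N) × Aut(H) →^λ H²(H, N), where λ(θ,φ) = [μ(φ(·),φ(·))·θ(μ(·,·))⁻¹]: a pair (θ,φ) is induced by an automorphism of G normalizing N if and only if λ(θ,φ) = 1. -/

import Mathlib

theorem stmt_10_aux {A : Type*} [CommGroup A] (m a b c d : A) :
    (m * d⁻¹ = a⁻¹ * b⁻¹ * c) ↔ (m * a * b = c * d) := by
  constructor
  · intro h
    have h0 : m * d⁻¹ * (a⁻¹ * b⁻¹ * c)⁻¹ = 1 := by rw [h]; group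
    have h2 : (m * a * b) * (c * d)⁻¹ = 1 := by
      rw [← h0]; simp [mul_comm, mul_left_comm, mul_assoc]
    exact mul_inv_eq_one.mp h2
  · intro h
    have h0 : (m * a * b) * (c * d)⁻¹ = 1 := by rw [h]; group
    have h2 : m * d⁻¹ * (a⁻¹ * b⁻¹ * c)⁻¹ = 1 := by
      rw [← h0]; simp [mul_comm, mul_left_comm, mul_assoc]
    exact mul_inv_eq_one.mp h2

/-- For a central extension 1 → N → G → H → 1, exactness of
1 → Aut^{N,H}(G) → Aut_N(G) →^τ Aut(N) × Aut(H) →^λ H²(H,N):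
a pair (θ,φ) is induced by an automorphism of G normalizing N if and only if
λ(θ,φ) = [μ(φ(·),φ(·))·θ(μ(·,·))⁻¹] is trivial, i.e. this cocycle is the
coboundary χ(x)⁻¹·χ(y)⁻¹·χ(xy) of some χ : H → N with χ(1) = 1. -/
theorem stmt_10 {G : Type*} [Group G] (N : Subgroup G) [N.Normal]
    (hZ : N ≤ Subgroup.center G)
    (t : G ⧸ N → G) (ht : ∀ x : G ⧸ N, (QuotientGroup.mk (t x) : G ⧸ N) = x)
    (ht1 : t 1 = 1)
    (μ : G ⧸ N → G ⧸ N → N)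
    (hμ : ∀ x y : G ⧸ N, t (x * y) * (μ x y : G) = t x * t y)
    (θ : N ≃* N) (φ : G ⧸ N ≃* G ⧸ N) :
    (∃ γ : G ≃* G,
        (∀ n ∈ N, γ n ∈ N) ∧
        (∀ n : N, γ n = (θ n : G)) ∧
        (∀ g : G, (QuotientGroup.mk (γ g) : G ⧸ N) = φ (QuotientGroup.mk g))) ↔
      ∃ χ : G ⧸ N → N, χ 1 = 1 ∧
        ∀ x y : G ⧸ N,
          (μ (φ x) (φ y) : G) * ((θ (μ x y) : G))⁻¹ =
            ((χ x : G))⁻¹ * ((χ y : G))⁻¹ * (χ (x * y) : G) := by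
  letI : CommGroup N :=
    { N.toGroup with mul_comm := fun a b => Subtype.ext (Subgroup.mem_center_iff.mp (hZ b.2) a) }
  have hswap : ∀ (g n : G), n ∈ N → n * g = g * n := fun g n hn =>
    ((Subgroup.mem_center_iff.mp (hZ hn)) g).symm
  have hmk : ∀ n : N, (QuotientGroup.mk (n : G) : G ⧸ N) = 1 := fun n =>
    (QuotientGroup.eq_one_iff _).mpr n.2
  -- the common bridge between the G-level coboundary equation and an N-level identity
  have bridge : ∀ (χ : G ⧸ N → N) (x y : G ⧸ N),
      ((μ (φ x) (φ y) : G) * ((θ (μ x y) : G))⁻¹ =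
        ((χ x : G))⁻¹ * ((χ y : G))⁻¹ * (χ (x * y) : G)) ↔
      μ (φ x) (φ y) * χ x * χ y = χ (x * y) * θ (μ x y) := by
    intro χ x y
    constructor
    · intro h
      have h' : μ (φ x) (φ y) * (θ (μ x y))⁻¹ = (χ x)⁻¹ * (χ y)⁻¹ * χ (x * y) := by
        apply Subtype.ext; push_cast; exact h
      exact (stmt_10_aux (A := N) (μ (φ x) (φ y)) (χ x) (χ y) (χ (x * y)) (θ (μ x y))).mp h'
    · intro h
      have h' : μ (φ x) (φ y) * (θ (μ x y))⁻¹ = (χ x)⁻¹ * (χ y)⁻¹ * χ (x * y) :=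
        (stmt_10_aux (A := N) (μ (φ x) (φ y)) (χ x) (χ y) (χ (x * y)) (θ (μ x y))).mpr h
      exact_mod_cast congrArg Subtype.val h'
  constructor
  · -- forward direction
    rintro ⟨γ, hγN, hγθ, hγφ⟩
    have memχ : ∀ x : G ⧸ N, (t (φ x))⁻¹ * γ (t x) ∈ N := by
      intro x
      apply (QuotientGroup.eq_one_iff _).mp
      rw [QuotientGroup.mk_mul, QuotientGroup.mk_inv, ht, hγφ, ht, inv_mul_cancel]
    let χ₀ : G ⧸ N → N := fun x => ⟨(t (φ x))⁻¹ * γ (t x), memχ x⟩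
    have hχ₀ : ∀ z : G ⧸ N, (χ₀ z : G) = (t (φ z))⁻¹ * γ (t z) := fun z => rfl
    refine ⟨χ₀, ?_, ?_⟩
    · apply Subtype.ext
      rw [hχ₀]
      simp [ht1]
    · intro x y
      have hγmul : γ (t x) * γ (t y) = γ (t (x * y)) * (θ (μ x y) : G) := by
        rw [← map_mul, ← hμ, map_mul, hγθ]
      have e1 : t (φ x) * t (φ y) = t (φ (x * y)) * (μ (φ x) (φ y) : G) := by
        rw [← hμ, ← map_mul]
      have e2 : t (φ x) * ((t (φ x))⁻¹ * γ (t x)) * (t (φ y) * ((t (φ y))⁻¹ * γ (t y))) =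
          t (φ (x * y)) *
            ((μ (φ x) (φ y) : G) * ((t (φ x))⁻¹ * γ (t x)) * ((t (φ y))⁻¹ * γ (t y))) := by
        calc t (φ x) * ((t (φ x))⁻¹ * γ (t x)) * (t (φ y) * ((t (φ y))⁻¹ * γ (t y)))
            = t (φ x) * (((t (φ x))⁻¹ * γ (t x)) * t (φ y)) * ((t (φ y))⁻¹ * γ (t y)) := by
              group
          _ = t (φ x) * (t (φ y) * ((t (φ x))⁻¹ * γ (t x))) * ((t (φ y))⁻¹ * γ (t y)) := by
              rw [hswap (t (φ y)) _ (memχ x)]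
          _ = (t (φ x) * t (φ y)) * (((t (φ x))⁻¹ * γ (t x)) * ((t (φ y))⁻¹ * γ (t y))) := by
              group
          _ = (t (φ (x * y)) * (μ (φ x) (φ y) : G)) *
                (((t (φ x))⁻¹ * γ (t x)) * ((t (φ y))⁻¹ * γ (t y))) := by rw [e1]
          _ = t (φ (x * y)) *
                ((μ (φ x) (φ y) : G) * ((t (φ x))⁻¹ * γ (t x)) * ((t (φ y))⁻¹ * γ (t y))) := by
              group
      have e3 : t (φ x) * ((t (φ x))⁻¹ * γ (t x)) * (t (φ y) * ((t (φ y))⁻¹ * γ (t y))) =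
          t (φ (x * y)) * (((t (φ (x * y)))⁻¹ * γ (t (x * y))) * (θ (μ x y) : G)) := by
        have e4 : t (φ x) * ((t (φ x))⁻¹ * γ (t x)) * (t (φ y) * ((t (φ y))⁻¹ * γ (t y))) =
            γ (t x) * γ (t y) := by group
        rw [e4, hγmul]; group
      have key : (μ (φ x) (φ y) : G) * ((t (φ x))⁻¹ * γ (t x)) * ((t (φ y))⁻¹ * γ (t y)) =
          ((t (φ (x * y)))⁻¹ * γ (t (x * y))) * (θ (μ x y) : G) :=
        mul_left_cancel (e2.symm.trans e3)
      refine (bridge χ₀ x y).mpr ?_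
      apply Subtype.ext
      push_cast
      exact key
  · -- backward direction
    rintro ⟨χ, hχ1, hχ⟩
    have hkey : ∀ x y : G ⧸ N, μ (φ x) (φ y) * χ x * χ y = χ (x * y) * θ (μ x y) :=
      fun x y => (bridge χ x y).mp (hχ x y)
    have hkeyG : ∀ x y : G ⧸ N,
        (χ (x * y) : G) * (θ (μ x y) : G) =
          (μ (φ x) (φ y) : G) * (χ x : G) * (χ y : G) := by
      intro x y
      exact_mod_cast congrArg Subtype.val (hkey x y).symm
    have memν : ∀ g : G, (t (QuotientGroup.mk g))⁻¹ * g ∈ N := by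
      intro g
      apply (QuotientGroup.eq_one_iff _).mp
      rw [QuotientGroup.mk_mul, QuotientGroup.mk_inv, ht, inv_mul_cancel]
    let ν : G → N := fun g => ⟨(t (QuotientGroup.mk g))⁻¹ * g, memν g⟩
    have hνcoe : ∀ g : G, (ν g : G) = (t (QuotientGroup.mk g))⁻¹ * g := fun g => rfl
    have hν : ∀ g : G, g = t (QuotientGroup.mk g) * (ν g : G) := by
      intro g; rw [hνcoe]; group
    let f : G → G := fun g =>
      t (φ (QuotientGroup.mk g)) * ((χ (QuotientGroup.mk g) : G) * (θ (ν g) : G))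
    have hfdef : ∀ g : G,
        f g = t (φ (QuotientGroup.mk g)) * ((χ (QuotientGroup.mk g) : G) * (θ (ν g) : G)) :=
      fun g => rfl
    have hνmul : ∀ g h : G,
        ν (g * h) = μ (QuotientGroup.mk g) (QuotientGroup.mk h) * ν g * ν h := by
      intro g h
      apply Subtype.ext
      show (t (QuotientGroup.mk (g * h)))⁻¹ * (g * h) =
        ((μ (QuotientGroup.mk g) (QuotientGroup.mk h) * ν g * ν h : N) : G)
      push_cast
      rw [QuotientGroup.mk_mul]
      have h1 : t ((QuotientGroup.mk g : G ⧸ N) * QuotientGroup.mk h) =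
          t (QuotientGroup.mk g) * t (QuotientGroup.mk h) *
            ((μ (QuotientGroup.mk g) (QuotientGroup.mk h) : G))⁻¹ := by
        rw [← hμ]; group
      calc (t ((QuotientGroup.mk g : G ⧸ N) * QuotientGroup.mk h))⁻¹ * (g * h)
          = (μ (QuotientGroup.mk g) (QuotientGroup.mk h) : G) * (t (QuotientGroup.mk h))⁻¹ *
              (((t (QuotientGroup.mk g))⁻¹ * g) * h) := by rw [h1]; group
        _ = (μ (QuotientGroup.mk g) (QuotientGroup.mk h) : G) * (t (QuotientGroup.mk h))⁻¹ *
              (h * ((t (QuotientGroup.mk g))⁻¹ * g)) := by rw [hswap h _ (memν g)]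
        _ = (μ (QuotientGroup.mk g) (QuotientGroup.mk h) : G) *
              (((t (QuotientGroup.mk h))⁻¹ * h) * ((t (QuotientGroup.mk g))⁻¹ * g)) := by group
        _ = (μ (QuotientGroup.mk g) (QuotientGroup.mk h) : G) *
              (((t (QuotientGroup.mk g))⁻¹ * g) * ((t (QuotientGroup.mk h))⁻¹ * h)) := by
            rw [hswap ((t (QuotientGroup.mk h))⁻¹ * h) _ (memν g)]
        _ = (μ (QuotientGroup.mk g) (QuotientGroup.mk h) : G) *
              ((t (QuotientGroup.mk g))⁻¹ * g) * ((t (QuotientGroup.mk h))⁻¹ * h) := by group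
    have hmkf : ∀ g : G, (QuotientGroup.mk (f g) : G ⧸ N) = φ (QuotientGroup.mk g) := by
      intro g
      rw [hfdef, QuotientGroup.mk_mul, QuotientGroup.mk_mul, ht, hmk, hmk, mul_one, mul_one]
    have fmul : ∀ g h : G, f (g * h) = f g * f h := by
      intro g h
      have hθν : (θ (ν (g * h)) : G) =
          (θ (μ (QuotientGroup.mk g) (QuotientGroup.mk h)) : G) * (θ (ν g) : G) *
            (θ (ν h) : G) := by
        rw [hνmul, map_mul, map_mul]
        push_cast
        rfl
      have e5 : t (φ (QuotientGroup.mk g) * φ (QuotientGroup.mk h)) =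
          t (φ (QuotientGroup.mk g)) * t (φ (QuotientGroup.mk h)) *
            ((μ (φ (QuotientGroup.mk g)) (φ (QuotientGroup.mk h)) : G))⁻¹ := by
        rw [← hμ]; group
      rw [hfdef, hfdef, hfdef, QuotientGroup.mk_mul, hθν]
      calc t (φ ((QuotientGroup.mk g : G ⧸ N) * QuotientGroup.mk h)) *
            ((χ ((QuotientGroup.mk g : G ⧸ N) * QuotientGroup.mk h) : G) *
              ((θ (μ (QuotientGroup.mk g) (QuotientGroup.mk h)) : G) * (θ (ν g) : G) *
                (θ (ν h) : G)))
          = t (φ ((QuotientGroup.mk g : G ⧸ N) * QuotientGroup.mk h)) *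
              (((χ ((QuotientGroup.mk g : G ⧸ N) * QuotientGroup.mk h) : G) *
                  (θ (μ (QuotientGroup.mk g) (QuotientGroup.mk h)) : G)) *
                ((θ (ν g) : G) * (θ (ν h) : G))) := by group
        _ = t (φ ((QuotientGroup.mk g : G ⧸ N) * QuotientGroup.mk h)) *
              (((μ (φ (QuotientGroup.mk g)) (φ (QuotientGroup.mk h)) : G) *
                  (χ (QuotientGroup.mk g) : G) * (χ (QuotientGroup.mk h) : G)) *
                ((θ (ν g) : G) * (θ (ν h) : G))) := by rw [hkeyG]
        _ = (t (φ (QuotientGroup.mk g)) * t (φ (QuotientGroup.mk h))) *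
              ((χ (QuotientGroup.mk g) : G) * (χ (QuotientGroup.mk h) : G) *
                ((θ (ν g) : G) * (θ (ν h) : G))) := by
            rw [map_mul φ, e5]; group
        _ = t (φ (QuotientGroup.mk g)) *
              ((χ (QuotientGroup.mk g) : G) * ((θ (ν g) : G) *
                (t (φ (QuotientGroup.mk h)) * ((χ (QuotientGroup.mk h) : G) *
                  (θ (ν h) : G))))) := by
            have hCB : (χ (QuotientGroup.mk h) : G) * (θ (ν g) : G) =
                (θ (ν g) : G) * (χ (QuotientGroup.mk h) : G) :=
              hswap ((θ (ν g) : G)) _ (χ (QuotientGroup.mk h)).2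
            have hsAB : t (φ (QuotientGroup.mk h)) *
                  ((χ (QuotientGroup.mk g) : G) * (θ (ν g) : G)) =
                ((χ (QuotientGroup.mk g) : G) * (θ (ν g) : G)) *
                  t (φ (QuotientGroup.mk h)) :=
              (hswap (t (φ (QuotientGroup.mk h))) _
                (N.mul_mem (χ (QuotientGroup.mk g)).2 (θ (ν g)).2)).symm
            calc (t (φ (QuotientGroup.mk g)) * t (φ (QuotientGroup.mk h))) *
                  ((χ (QuotientGroup.mk g) : G) * (χ (QuotientGroup.mk h) : G) *
                    ((θ (ν g) : G) * (θ (ν h) : G)))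
                = t (φ (QuotientGroup.mk g)) * (t (φ (QuotientGroup.mk h)) *
                    ((χ (QuotientGroup.mk g) : G) *
                      ((χ (QuotientGroup.mk h) : G) * (θ (ν g) : G)) *
                        (θ (ν h) : G))) := by group
              _ = t (φ (QuotientGroup.mk g)) * (t (φ (QuotientGroup.mk h)) *
                    ((χ (QuotientGroup.mk g) : G) *
                      ((θ (ν g) : G) * (χ (QuotientGroup.mk h) : G)) *
                        (θ (ν h) : G))) := by rw [hCB]
              _ = t (φ (QuotientGroup.mk g)) * ((t (φ (QuotientGroup.mk h)) *
                    ((χ (QuotientGroup.mk g) : G) * (θ (ν g) : G))) *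
                      ((χ (QuotientGroup.mk h) : G) * (θ (ν h) : G))) := by group
              _ = t (φ (QuotientGroup.mk g)) * ((((χ (QuotientGroup.mk g) : G) *
                    (θ (ν g) : G)) * t (φ (QuotientGroup.mk h))) *
                      ((χ (QuotientGroup.mk h) : G) * (θ (ν h) : G))) := by rw [hsAB]
              _ = t (φ (QuotientGroup.mk g)) *
                    ((χ (QuotientGroup.mk g) : G) * ((θ (ν g) : G) *
                      (t (φ (QuotientGroup.mk h)) * ((χ (QuotientGroup.mk h) : G) *
                        (θ (ν h) : G))))) := by group
        _ = t (φ (QuotientGroup.mk g)) *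
              ((χ (QuotientGroup.mk g) : G) * (θ (ν g) : G)) *
              (t (φ (QuotientGroup.mk h)) *
                ((χ (QuotientGroup.mk h) : G) * (θ (ν h) : G))) := by group
    let F : G →* G := MonoidHom.mk' f fmul
    have finj : Function.Injective F := by
      refine (injective_iff_map_eq_one F).mpr ?_
      intro g hg
      have hg' : f g = 1 := hg
      have h1 : φ (QuotientGroup.mk g) = 1 := by
        rw [← hmkf g, hg']
        simp
      have h2 : (QuotientGroup.mk g : G ⧸ N) = 1 := by
        have := φ.injective (h1.trans (map_one φ).symm)
        simpa using this
      have h3 : f g = (θ (ν g) : G) := by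
        rw [hfdef, h2, map_one, ht1, hχ1]; simp
      have h4 : θ (ν g) = 1 := by
        apply Subtype.ext
        rw [← h3, hg']; simp
      have h5 : ν g = 1 := θ.injective (by rw [h4, map_one])
      have h6 : (t (QuotientGroup.mk g : G ⧸ N))⁻¹ * g = 1 := by
        rw [← hνcoe, h5]; simp
      rw [h2, ht1] at h6
      simpa using h6
    have fsurj : Function.Surjective F := by
      intro g'
      refine ⟨t (φ.symm (QuotientGroup.mk g')) *
        ((θ.symm ((χ (φ.symm (QuotientGroup.mk g')))⁻¹ * ν g') : N) : G), ?_⟩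
      have hmkg : (QuotientGroup.mk (t (φ.symm (QuotientGroup.mk g')) *
          ((θ.symm ((χ (φ.symm (QuotientGroup.mk g')))⁻¹ * ν g') : N) : G)) : G ⧸ N) =
          φ.symm (QuotientGroup.mk g') := by
        rw [QuotientGroup.mk_mul, ht, hmk, mul_one]
      have hνg : ν (t (φ.symm (QuotientGroup.mk g')) *
          ((θ.symm ((χ (φ.symm (QuotientGroup.mk g')))⁻¹ * ν g') : N) : G)) =
          θ.symm ((χ (φ.symm (QuotientGroup.mk g')))⁻¹ * ν g') := by
        apply Subtype.ext
        rw [hνcoe, hmkg]; group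
      show f _ = g'
      rw [hfdef, hmkg, hνg, MulEquiv.apply_symm_apply, MulEquiv.apply_symm_apply]
      push_cast
      calc t (QuotientGroup.mk g') * ((χ (φ.symm (QuotientGroup.mk g')) : G) *
            (((χ (φ.symm (QuotientGroup.mk g')) : G))⁻¹ * (ν g' : G)))
          = t (QuotientGroup.mk g') * (ν g' : G) := by group
        _ = g' := (hν g').symm
    refine ⟨MulEquiv.ofBijective F ⟨finj, fsurj⟩, ?_, ?_, ?_⟩
    · intro n hn
      have h2 : (QuotientGroup.mk n : G ⧸ N) = 1 := (QuotientGroup.eq_one_iff n).mpr hn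
      have h3 : MulEquiv.ofBijective F ⟨finj, fsurj⟩ n = (θ (ν n) : G) := by
        show f n = _
        rw [hfdef, h2, map_one, ht1, hχ1]; simp
      rw [h3]; exact (θ (ν n)).2
    · intro n
      have h2 : (QuotientGroup.mk (n : G) : G ⧸ N) = 1 := hmk n
      have hνn : ν (n : G) = n := by
        apply Subtype.ext
        rw [hνcoe, h2, ht1]; group
      show f (n : G) = (θ n : G)
      rw [hfdef, h2, map_one, ht1, hχ1, hνn]; simp
    · intro g
      show (QuotientGroup.mk (f g) : G ⧸ N) = φ (QuotientGroup.mk g)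
      exact hmkf g
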